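/- Let z₁,...,z_n be pairwise distinct elements of a field and m a nonnegative integer. Then Σ_{j=1}^n z_j^m / ∏_{i ≠ j} (z_j − z_i) equals 0 if m < n − 1, equals 1 if m = n − 1, and equals the complete homogeneous symmetric polynomial h_{m−n+1}(z₁,...,z_n) if m ≥ n − 1. -/

import Mathlib

open Finset

/-- The complete homogeneous symmetric polynomial `h_d(z₁,...,z_n)`, expressed as the
sum over weakly increasing tuples `f : Fin d → Fin n` of `∏ i, z (f i)`. -/
def completeHomogeneous {K : Type*} [CommRing K] (n d : ℕ) (z : Fin n → K) : K :=
  ∑ f ∈ (Finset.univ : Finset (Fin d → Fin n)).filter Monotone, ∏ i, z (f i)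

lemma monotone_cons_zero {n d : ℕ} {g : Fin d → Fin (n+1)} (h : Monotone g) :
    Monotone (Fin.cons 0 g) := by
  intro i j hij
  induction i using Fin.cases with
  | zero => simp [Fin.zero_le]
  | succ i =>
    induction j using Fin.cases with
    | zero => exact absurd (le_antisymm hij (Fin.zero_le _)) (Fin.succ_ne_zero i)
    | succ j => simpa using h (by simpa using hij)

lemma monotone_snoc_last {n d : ℕ} {g : Fin d → Fin (n+1)} (h : Monotone g) :
    Monotone (Fin.snoc g (Fin.last n)) := by
  intro i j hij
  induction j using Fin.lastCases with
  | last => simp [Fin.le_last]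
  | cast j =>
    induction i using Fin.lastCases with
    | last => exact absurd (le_antisymm hij (by simpa using Fin.le_last _)) (by simp [Fin.ext_iff]; omega)
    | cast i => simpa using h (by simpa using hij)

lemma ch_zero {K : Type*} [CommRing K] (n : ℕ) (z : Fin n → K) :
    completeHomogeneous n 0 z = 1 := by
  have h : ((Finset.univ : Finset (Fin 0 → Fin n)).filter Monotone) = Finset.univ :=
    Finset.filter_true_of_mem fun f _ => fun i j _ => i.elim0
  rw [completeHomogeneous, h]
  simp

lemma ch_succ_last {K : Type*} [CommRing K] (n d : ℕ) (z : Fin (n+1) → K) :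
    completeHomogeneous (n+1) (d+1) z =
      completeHomogeneous n (d+1) (z ∘ Fin.castSucc) +
        z (Fin.last n) * completeHomogeneous (n+1) d z := by
  have key := Finset.sum_filter_add_sum_filter_not
    ((Finset.univ : Finset (Fin (d+1) → Fin (n+1))).filter Monotone)
    (fun f => f (Fin.last d) = Fin.last n) (fun f => ∏ i, z (f i))
  have h1 : ∑ f ∈ (((Finset.univ : Finset (Fin (d+1) → Fin (n+1))).filter Monotone).filter
      (fun f => f (Fin.last d) = Fin.last n)), ∏ i, z (f i) =
      z (Fin.last n) * completeHomogeneous (n+1) d z := by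
    rw [completeHomogeneous, Finset.mul_sum]
    refine Finset.sum_nbij' (fun (f : Fin (d+1) → Fin (n+1)) => f ∘ Fin.castSucc)
      (fun (g : Fin d → Fin (n+1)) => Fin.snoc g (Fin.last n)) ?_ ?_ ?_ ?_ ?_
    · intro f hf
      simp only [Finset.mem_filter, Finset.mem_univ, true_and] at hf ⊢
      exact hf.1.comp Fin.strictMono_castSucc.monotone
    · intro g hg
      simp only [Finset.mem_filter, Finset.mem_univ, true_and] at hg ⊢
      exact ⟨monotone_snoc_last hg, by simp⟩
    · intro f hf
      simp only [Finset.mem_filter, Finset.mem_univ, true_and] at hf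
      funext i
      induction i using Fin.lastCases with
      | last => simp [hf.2]
      | cast i => simp
    · intro g hg
      funext i; simp
    · intro f hf
      simp only [Finset.mem_filter, Finset.mem_univ, true_and] at hf
      have : (fun i => z (f i)) = Fin.snoc (fun i => z ((f ∘ Fin.castSucc) i)) (z (Fin.last n)) := by
        funext i
        induction i using Fin.lastCases with
        | last => simp [hf.2]
        | cast i => simp
      calc ∏ i, z (f i) = ∏ i, Fin.snoc (fun i => z ((f ∘ Fin.castSucc) i)) (z (Fin.last n)) i := by rw [← this]
        _ = z (Fin.last n) * ∏ i, z ((f ∘ Fin.castSucc) i) := by rw [Fin.prod_snoc]; ring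
  have h2 : ∑ f ∈ (((Finset.univ : Finset (Fin (d+1) → Fin (n+1))).filter Monotone).filter
      (fun f => ¬ f (Fin.last d) = Fin.last n)), ∏ i, z (f i) =
      completeHomogeneous n (d+1) (z ∘ Fin.castSucc) := by
    rw [completeHomogeneous]
    refine Finset.sum_bij (fun f hf => fun k => (f k).castPred ?_) ?_ ?_ ?_ ?_
    · simp only [Finset.mem_filter, Finset.mem_univ, true_and] at hf
      intro hk
      exact hf.2 (le_antisymm (Fin.le_last _) (hk ▸ hf.1 (Fin.le_last k)))
    · intro f hf
      simp only [Finset.mem_filter, Finset.mem_univ, true_and] at hf ⊢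
      intro i j hij
      exact Fin.castPred_le_castPred_iff.2 (hf.1 hij)
    · intro f hf f' hf' h
      funext k
      have := congrFun h k
      simpa [Fin.ext_iff] using this
    · intro g hg
      simp only [Finset.mem_filter, Finset.mem_univ, true_and] at hg
      refine ⟨Fin.castSucc ∘ g, ?_, ?_⟩
      · simp only [Finset.mem_filter, Finset.mem_univ, true_and]
        refine ⟨Fin.strictMono_castSucc.monotone.comp hg, ?_⟩
        simp [Fin.ext_iff]; omega
      · funext k; simp
    · intro f hf
      apply Finset.prod_congr rfl
      intro k _
      simp [Function.comp]
  rw [completeHomogeneous, ← key, h1, h2]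
  ring

lemma ch_succ_first {K : Type*} [CommRing K] (n d : ℕ) (z : Fin (n+1) → K) :
    completeHomogeneous (n+1) (d+1) z =
      completeHomogeneous n (d+1) (z ∘ Fin.succ) +
        z 0 * completeHomogeneous (n+1) d z := by
  have key := Finset.sum_filter_add_sum_filter_not
    ((Finset.univ : Finset (Fin (d+1) → Fin (n+1))).filter Monotone)
    (fun f => f 0 = 0) (fun f => ∏ i, z (f i))
  have h1 : ∑ f ∈ (((Finset.univ : Finset (Fin (d+1) → Fin (n+1))).filter Monotone).filter
      (fun f => f 0 = 0)), ∏ i, z (f i) =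
      z 0 * completeHomogeneous (n+1) d z := by
    rw [completeHomogeneous, Finset.mul_sum]
    refine Finset.sum_nbij' (fun (f : Fin (d+1) → Fin (n+1)) => f ∘ Fin.succ)
      (fun (g : Fin d → Fin (n+1)) => Fin.cons 0 g) ?_ ?_ ?_ ?_ ?_
    · intro f hf
      simp only [Finset.mem_filter, Finset.mem_univ, true_and] at hf ⊢
      exact hf.1.comp Fin.strictMono_succ.monotone
    · intro g hg
      simp only [Finset.mem_filter, Finset.mem_univ, true_and] at hg ⊢
      exact ⟨monotone_cons_zero hg, by simp⟩
    · intro f hf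
      simp only [Finset.mem_filter, Finset.mem_univ, true_and] at hf
      funext i
      induction i using Fin.cases with
      | zero => simp [hf.2]
      | succ i => simp
    · intro g hg
      funext i; simp
    · intro f hf
      simp only [Finset.mem_filter, Finset.mem_univ, true_and] at hf
      have : (fun i => z (f i)) = Fin.cons (z 0) (fun i => z ((f ∘ Fin.succ) i)) := by
        funext i
        induction i using Fin.cases with
        | zero => simp [hf.2]
        | succ i => simp
      calc ∏ i, z (f i) = ∏ i, Fin.cons (z 0) (fun i => z ((f ∘ Fin.succ) i)) i := by rw [← this]
        _ = z 0 * ∏ i, z ((f ∘ Fin.succ) i) := by rw [Fin.prod_cons]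
  have h2 : ∑ f ∈ (((Finset.univ : Finset (Fin (d+1) → Fin (n+1))).filter Monotone).filter
      (fun f => ¬ f 0 = 0)), ∏ i, z (f i) =
      completeHomogeneous n (d+1) (z ∘ Fin.succ) := by
    rw [completeHomogeneous]
    refine Finset.sum_bij (fun f hf => fun k => (f k).pred ?_) ?_ ?_ ?_ ?_
    · simp only [Finset.mem_filter, Finset.mem_univ, true_and] at hf
      intro hk
      exact hf.2 (le_antisymm (hk ▸ hf.1 (Fin.zero_le k)) (Fin.zero_le _))
    · intro f hf
      simp only [Finset.mem_filter, Finset.mem_univ, true_and] at hf ⊢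
      intro i j hij
      exact Fin.pred_le_pred_iff.2 (hf.1 hij)
    · intro f hf f' hf' h
      funext k
      exact Fin.pred_inj.mp (congrFun h k)
    · intro g hg
      simp only [Finset.mem_filter, Finset.mem_univ, true_and] at hg
      refine ⟨Fin.succ ∘ g, ?_, ?_⟩
      · simp only [Finset.mem_filter, Finset.mem_univ, true_and]
        exact ⟨Fin.strictMono_succ.monotone.comp hg, by simp [Fin.ext_iff]⟩
      · funext k; simp
    · intro f hf
      apply Finset.prod_congr rfl
      intro k _
      simp [Function.comp]
  rw [completeHomogeneous, ← key, h1, h2]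
  ring

lemma ch_one_var {K : Type*} [CommRing K] (d : ℕ) (z : Fin 1 → K) :
    completeHomogeneous 1 d z = z 0 ^ d := by
  have h : ((Finset.univ : Finset (Fin d → Fin 1)).filter Monotone) = Finset.univ :=
    Finset.filter_true_of_mem fun f _ => fun i j _ => by
      simp [Subsingleton.elim (f i) (f j)]
  rw [completeHomogeneous, h]
  rw [show (Finset.univ : Finset (Fin d → Fin 1)) = {fun _ => 0} from by
    ext f; simp [funext_iff, Subsingleton.elim (α := Fin 1)]]
  simp

lemma ch_sub {K : Type*} [CommRing K] (n d : ℕ) (z : Fin (n+1) → K) :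
    completeHomogeneous n (d+1) (z ∘ Fin.succ) -
      completeHomogeneous n (d+1) (z ∘ Fin.castSucc) =
      (z (Fin.last n) - z 0) * completeHomogeneous (n+1) d z := by
  have h1 := ch_succ_last n d z
  have h2 := ch_succ_first n d z
  have : completeHomogeneous n (d+1) (z ∘ Fin.castSucc) + z (Fin.last n) * completeHomogeneous (n+1) d z
      = completeHomogeneous n (d+1) (z ∘ Fin.succ) + z 0 * completeHomogeneous (n+1) d z := by
    rw [← h1, ← h2]
  linear_combination -this

lemma reindex_succ {K : Type*} [Field K] (n m : ℕ) (z : Fin (n+2) → K) :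
    ∑ j : Fin (n+1), (z ∘ Fin.succ) j ^ m /
        ∏ i ∈ Finset.univ.erase j, ((z ∘ Fin.succ) j - (z ∘ Fin.succ) i) =
      ∑ j ∈ (Finset.univ : Finset (Fin (n+2))).erase 0,
        z j ^ m / ∏ i ∈ (Finset.univ.erase j).erase 0, (z j - z i) := by
  refine Finset.sum_bij (fun j _ => Fin.succ j) ?_ ?_ ?_ ?_
  · intro j _; simp [Fin.succ_ne_zero]
  · intro a _ b _ h; exact Fin.succ_injective _ h
  · intro j hj
    simp only [Finset.mem_erase, Finset.mem_univ, and_true] at hj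
    exact ⟨j.pred hj, Finset.mem_univ _, by simp⟩
  · intro j _
    congr 1
    refine Finset.prod_bij (fun i _ => Fin.succ i) ?_ ?_ ?_ ?_
    · intro i hi
      simp only [Finset.mem_erase, Finset.mem_univ, and_true] at hi ⊢
      exact ⟨Fin.succ_ne_zero i, fun h => hi (Fin.succ_injective _ h)⟩
    · intro a _ b _ h; exact Fin.succ_injective _ h
    · intro i hi
      simp only [Finset.mem_erase, Finset.mem_univ, and_true] at hi
      refine ⟨i.pred hi.1, ?_, by simp⟩
      simp only [Finset.mem_erase, Finset.mem_univ, and_true]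
      intro h
      exact hi.2 (by rw [← h]; simp)
    · intro i _; rfl

lemma reindex_castSucc {K : Type*} [Field K] (n m : ℕ) (z : Fin (n+2) → K) :
    ∑ j : Fin (n+1), (z ∘ Fin.castSucc) j ^ m /
        ∏ i ∈ Finset.univ.erase j, ((z ∘ Fin.castSucc) j - (z ∘ Fin.castSucc) i) =
      ∑ j ∈ (Finset.univ : Finset (Fin (n+2))).erase (Fin.last (n+1)),
        z j ^ m / ∏ i ∈ (Finset.univ.erase j).erase (Fin.last (n+1)), (z j - z i) := by
  refine Finset.sum_bij (fun j _ => Fin.castSucc j) ?_ ?_ ?_ ?_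
  · intro j _; simp [Fin.castSucc_lt_last j |>.ne]
  · intro a _ b _ h; exact Fin.castSucc_injective _ h
  · intro j hj
    simp only [Finset.mem_erase, Finset.mem_univ, and_true] at hj
    exact ⟨j.castPred hj, Finset.mem_univ _, by simp⟩
  · intro j _
    congr 1
    refine Finset.prod_bij (fun i _ => Fin.castSucc i) ?_ ?_ ?_ ?_
    · intro i hi
      simp only [Finset.mem_erase, Finset.mem_univ, and_true] at hi ⊢
      exact ⟨(Fin.castSucc_lt_last i).ne, fun h => hi (Fin.castSucc_injective _ h)⟩
    · intro a _ b _ h; exact Fin.castSucc_injective _ h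
    · intro i hi
      simp only [Finset.mem_erase, Finset.mem_univ, and_true] at hi
      refine ⟨i.castPred hi.1, ?_, by simp⟩
      simp only [Finset.mem_erase, Finset.mem_univ, and_true]
      intro h
      exact hi.2 (by rw [← h]; simp)
    · intro i _; rfl


lemma pointwise {K : Type*} [Field K] (n m : ℕ) (z : Fin (n+2) → K)
    (hz : Function.Injective z) (j : Fin (n+2)) :
    z j ^ m / ∏ i ∈ (Finset.univ.erase j).erase 0, (z j - z i) -
      z j ^ m / ∏ i ∈ (Finset.univ.erase j).erase (Fin.last (n+1)), (z j - z i) =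
    (z (Fin.last (n+1)) - z 0) * (z j ^ m / ∏ i ∈ Finset.univ.erase j, (z j - z i)) +
      (if j = 0 then z j ^ m / ∏ i ∈ Finset.univ.erase j, (z j - z i) else 0) -
      (if j = Fin.last (n+1) then z j ^ m / ∏ i ∈ Finset.univ.erase j, (z j - z i) else 0) := by
  have hlast0 : (Fin.last (n+1) : Fin (n+2)) ≠ 0 := by simp [Fin.ext_iff]
  have hne : ∀ i ∈ Finset.univ.erase j, z j - z i ≠ 0 := by
    intro i hi
    exact sub_ne_zero.mpr fun h => (Finset.mem_erase.mp hi).1 (hz h).symm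
  have hP : ∏ i ∈ Finset.univ.erase j, (z j - z i) ≠ 0 :=
    Finset.prod_ne_zero_iff.mpr hne
  have hQ0 : ∏ i ∈ (Finset.univ.erase j).erase 0, (z j - z i) ≠ 0 :=
    Finset.prod_ne_zero_iff.mpr fun i hi => hne i (Finset.mem_of_mem_erase hi)
  have hQL : ∏ i ∈ (Finset.univ.erase j).erase (Fin.last (n+1)), (z j - z i) ≠ 0 :=
    Finset.prod_ne_zero_iff.mpr fun i hi => hne i (Finset.mem_of_mem_erase hi)
  by_cases hj0 : j = 0
  · subst hj0
    rw [if_pos rfl, if_neg (fun h => hlast0 h.symm), Finset.erase_idem]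
    have eL : (z 0 - z (Fin.last (n+1))) *
        ∏ i ∈ (Finset.univ.erase (0 : Fin (n+2))).erase (Fin.last (n+1)), (z 0 - z i) =
        ∏ i ∈ Finset.univ.erase (0 : Fin (n+2)), (z 0 - z i) :=
      Finset.mul_prod_erase _ (fun i => z 0 - z i) (Finset.mem_erase.mpr ⟨hlast0, Finset.mem_univ _⟩)
    rw [Finset.erase_idem] at hQ0
    rw [← eL]
    have hsubL : z 0 - z (Fin.last (n+1)) ≠ 0 :=
      sub_ne_zero.mpr fun h => hlast0 (hz h.symm)
    field_simp
    ring
  · rw [if_neg hj0]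
    have hsub0 : z j - z 0 ≠ 0 := sub_ne_zero.mpr fun h => hj0 (hz h)
    have e0 : (z j - z 0) * ∏ i ∈ (Finset.univ.erase j).erase 0, (z j - z i) =
        ∏ i ∈ Finset.univ.erase j, (z j - z i) :=
      Finset.mul_prod_erase _ (fun i => z j - z i)
        (Finset.mem_erase.mpr ⟨fun h => hj0 h.symm, Finset.mem_univ _⟩)
    by_cases hjL : j = Fin.last (n+1)
    · subst hjL
      rw [if_pos rfl, Finset.erase_idem]
      rw [Finset.erase_idem] at hQL
      rw [← e0]
      field_simp
      ring
    · rw [if_neg hjL]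
      have hsubL : z j - z (Fin.last (n+1)) ≠ 0 := sub_ne_zero.mpr fun h => hjL (hz h)
      have eL : (z j - z (Fin.last (n+1))) *
          ∏ i ∈ (Finset.univ.erase j).erase (Fin.last (n+1)), (z j - z i) =
          ∏ i ∈ Finset.univ.erase j, (z j - z i) :=
        Finset.mul_prod_erase _ (fun i => z j - z i)
          (Finset.mem_erase.mpr ⟨fun h => hjL h.symm, Finset.mem_univ _⟩)
      rw [← e0]
      have eL' : (z j - z (Fin.last (n+1))) *
          ∏ i ∈ (Finset.univ.erase j).erase (Fin.last (n+1)), (z j - z i) =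
          (z j - z 0) * ∏ i ∈ (Finset.univ.erase j).erase 0, (z j - z i) := by
        rw [eL, ← e0]
      field_simp
      linear_combination (z j ^ m) * eL'

lemma F_rec {K : Type*} [Field K] (n m : ℕ) (z : Fin (n+2) → K)
    (hz : Function.Injective z) :
    (∑ j : Fin (n+1), (z ∘ Fin.succ) j ^ m /
        ∏ i ∈ Finset.univ.erase j, ((z ∘ Fin.succ) j - (z ∘ Fin.succ) i)) -
      (∑ j : Fin (n+1), (z ∘ Fin.castSucc) j ^ m /
        ∏ i ∈ Finset.univ.erase j, ((z ∘ Fin.castSucc) j - (z ∘ Fin.castSucc) i)) =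
      (z (Fin.last (n+1)) - z 0) *
        ∑ j : Fin (n+2), z j ^ m / ∏ i ∈ Finset.univ.erase j, (z j - z i) := by
  rw [reindex_succ, reindex_castSucc]
  rw [Finset.sum_erase_eq_sub (Finset.mem_univ (0 : Fin (n+2))),
    Finset.sum_erase_eq_sub (Finset.mem_univ (Fin.last (n+1)))]
  have key : (∑ j : Fin (n+2), z j ^ m / ∏ i ∈ (Finset.univ.erase j).erase 0, (z j - z i)) -
      (∑ j : Fin (n+2), z j ^ m / ∏ i ∈ (Finset.univ.erase j).erase (Fin.last (n+1)), (z j - z i)) =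
      (z (Fin.last (n+1)) - z 0) *
        (∑ j : Fin (n+2), z j ^ m / ∏ i ∈ Finset.univ.erase j, (z j - z i)) +
        (z 0 ^ m / ∏ i ∈ Finset.univ.erase (0 : Fin (n+2)), (z 0 - z i)) -
        (z (Fin.last (n+1)) ^ m / ∏ i ∈ Finset.univ.erase (Fin.last (n+1)), (z (Fin.last (n+1)) - z i)) := by
    rw [← Finset.sum_sub_distrib]
    rw [Finset.sum_congr rfl (fun j _ => pointwise n m z hz j)]
    rw [Finset.sum_sub_distrib, Finset.sum_add_distrib, ← Finset.mul_sum]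
    rw [Finset.sum_ite_eq' Finset.univ (0 : Fin (n+2))
      (fun j => z j ^ m / ∏ i ∈ Finset.univ.erase j, (z j - z i))]
    rw [Finset.sum_ite_eq' Finset.univ (Fin.last (n+1))
      (fun j => z j ^ m / ∏ i ∈ Finset.univ.erase j, (z j - z i))]
    simp
  have ha0 : (fun j => z j ^ m / ∏ i ∈ (Finset.univ.erase j).erase 0, (z j - z i)) 0 =
      z 0 ^ m / ∏ i ∈ Finset.univ.erase (0 : Fin (n+2)), (z 0 - z i) := by
    simp [Finset.erase_idem]
  have hbL : (fun j => z j ^ m / ∏ i ∈ (Finset.univ.erase j).erase (Fin.last (n+1)), (z j - z i))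
      (Fin.last (n+1)) =
      z (Fin.last (n+1)) ^ m / ∏ i ∈ Finset.univ.erase (Fin.last (n+1)), (z (Fin.last (n+1)) - z i) := by
    simp [Finset.erase_idem]
  simp only at ha0 hbL
  rw [ha0, hbL]
  linear_combination key

lemma main_ind {K : Type*} [Field K] :
    ∀ n : ℕ, ∀ z : Fin (n+1) → K, Function.Injective z → ∀ m : ℕ,
      (∑ j : Fin (n+1), z j ^ m / ∏ i ∈ Finset.univ.erase j, (z j - z i)) =
        if m < n then 0 else completeHomogeneous (n+1) (m - n) z := by
  intro n
  induction n with
  | zero =>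
    intro z _ m
    simp only [Nat.not_lt_zero, if_false, Nat.sub_zero]
    rw [Fin.sum_univ_one, ch_one_var]
    simp
  | succ n ih =>
    intro z hz m
    have hzs : Function.Injective (z ∘ Fin.succ) := hz.comp (Fin.succ_injective _)
    have hzc : Function.Injective (z ∘ Fin.castSucc) := hz.comp (Fin.castSucc_injective _)
    have hrec := F_rec n m z hz
    rw [ih _ hzs m, ih _ hzc m] at hrec
    have hsub : z (Fin.last (n+1)) - z 0 ≠ 0 :=
      sub_ne_zero.mpr fun h => by
        have : Fin.last (n+1) = 0 := hz h
        simp [Fin.ext_iff] at this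
    by_cases hm : m < n + 1
    · rw [if_pos hm]
      by_cases hm' : m < n
      · rw [if_pos hm', if_pos hm', sub_self] at hrec
        exact (mul_eq_zero.mp hrec.symm).resolve_left hsub
      · have hmn : m = n := by omega
        subst hmn
        rw [if_neg hm', if_neg hm', Nat.sub_self, ch_zero, ch_zero, sub_self] at hrec
        exact (mul_eq_zero.mp hrec.symm).resolve_left hsub
    · rw [if_neg hm]
      have hge : n + 1 ≤ m := by omega
      have hd : m - n = (m - (n+1)) + 1 := by omega
      rw [if_neg (by omega), if_neg (by omega), hd, ch_sub (n+1) (m - (n+1)) z] at hrec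
      exact mul_left_cancel₀ hsub hrec.symm

/-- Localization-type identity: for pairwise distinct `z₁,...,z_n` in a field and `m ≥ 0`,
`Σ_{j=1}^n z_j^m / ∏_{i≠j} (z_j - z_i)` equals `0` if `m < n-1`, equals `1` if `m = n-1`,
and equals the complete homogeneous symmetric polynomial `h_{m-n+1}(z)` if `m ≥ n-1`. -/
theorem sum_pow_div_prod_sub (K : Type*) [Field K] (n : ℕ) (hn : 0 < n)
    (z : Fin n → K) (hz : Function.Injective z) (m : ℕ) :
    (m < n - 1 → ∑ j : Fin n, z j ^ m / ∏ i ∈ Finset.univ.erase j, (z j - z i) = 0) ∧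
    (m = n - 1 → ∑ j : Fin n, z j ^ m / ∏ i ∈ Finset.univ.erase j, (z j - z i) = 1) ∧
    (n - 1 ≤ m → ∑ j : Fin n, z j ^ m / ∏ i ∈ Finset.univ.erase j, (z j - z i) =
      completeHomogeneous n (m - (n - 1)) z) := by
  obtain ⟨n', rfl⟩ : ∃ n', n = n' + 1 := ⟨n - 1, by omega⟩
  have H := main_ind n' z hz m
  simp only [Nat.add_sub_cancel]
  refine ⟨fun h => ?_, fun h => ?_, fun h => ?_⟩
  · rw [H, if_pos h]
  · rw [H, if_neg (by omega), h, Nat.sub_self, ch_zero]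
  · rw [H, if_neg (by omega)]
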